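/- Fix θ ∈ (0,1] and define f_θ(p) := 1 + cos(θ·log p) for primes p. Let β := min{1/θ, log X}. Then Σ_{p ≤ X} f_θ(p)/p = log(β·log X) + O(1), with an absolute implied constant. -/

import Mathlib

open Finset in
private lemma cheb (n : ℕ) :
    ∑ p ∈ (Finset.range (n + 1)).filter Nat.Prime, Real.log p ≤ n * Real.log 4 := by
  have h4 := primorial_le_4_pow n
  have hlog : Real.log (primorial n : ℝ) ≤ Real.log ((4 : ℝ) ^ n) := by
    have hpos : 0 < primorial n := by
      rw [primorial]; exact Finset.prod_pos fun p hp => (Finset.mem_filter.mp hp).2.pos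
    apply Real.log_le_log (by exact_mod_cast hpos)
    exact_mod_cast h4
  rw [Real.log_pow] at hlog
  have hprod : Real.log (primorial n : ℝ)
      = ∑ p ∈ (Finset.range (n + 1)).filter Nat.Prime, Real.log p := by
    rw [primorial]
    push_cast
    rw [Real.log_prod]
    intro p hp
    have := (Finset.mem_filter.mp hp).2
    exact_mod_cast this.pos.ne'
  rw [hprod] at hlog
  exact hlog.trans_eq (by push_cast; ring)

private lemma geom_bound {r : ℝ} (h0 : 0 ≤ r) (h1 : r < 1) (m : ℕ) :
    ∑ k ∈ Finset.range m, r ^ k ≤ (1 - r)⁻¹ := by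
  calc ∑ k ∈ Finset.range m, r ^ k ≤ ∑' k : ℕ, r ^ k :=
        Summable.sum_le_tsum _ (fun i _ => by positivity) (summable_geometric_of_lt_one h0 h1)
    _ = (1 - r)⁻¹ := tsum_geometric_of_lt_one h0 h1


private lemma dyadic (σ : ℝ) (hσ : 1 ≤ σ) (X : ℕ) :
    ∑ p ∈ (Finset.range (X + 1)).filter Nat.Prime, Real.log p / (p : ℝ) ^ σ
      ≤ 2 * Real.log 4 * ∑ k ∈ Finset.range (Nat.log 2 X + 1), ((2 : ℝ) ^ (1 - σ)) ^ k := by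
  set S := (Finset.range (X + 1)).filter Nat.Prime with hS
  have hmaps : ∀ p ∈ S, Nat.log 2 p ∈ Finset.range (Nat.log 2 X + 1) := by
    intro p hp
    rw [Finset.mem_range, Nat.lt_succ_iff]
    exact Nat.log_mono_right (Nat.lt_succ_iff.mp (Finset.mem_range.mp (Finset.mem_filter.mp hp).1))
  rw [← Finset.sum_fiberwise_of_maps_to hmaps (fun p => Real.log p / (p : ℝ) ^ σ),
    Finset.mul_sum]
  apply Finset.sum_le_sum
  intro k _
  -- fiber bound
  have hfib : ∀ p ∈ S.filter (fun p => Nat.log 2 p = k),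
      Real.log p / (p : ℝ) ^ σ ≤ Real.log p * (((2 : ℝ) ^ k) ^ σ)⁻¹ := by
    intro p hp
    obtain ⟨hpS, hpk⟩ := Finset.mem_filter.mp hp
    have hprime := (Finset.mem_filter.mp hpS).2
    have hlb : (2 : ℕ) ^ k ≤ p := hpk ▸ Nat.pow_log_le_self 2 hprime.pos.ne'
    have hlbR : ((2 : ℝ) ^ k) ≤ (p : ℝ) := by exact_mod_cast hlb
    have h2k : (0 : ℝ) < (2 : ℝ) ^ k := by positivity
    have hmono : ((2 : ℝ) ^ k) ^ σ ≤ (p : ℝ) ^ σ :=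
      Real.rpow_le_rpow h2k.le hlbR (by linarith)
    rw [div_eq_mul_inv]
    apply mul_le_mul_of_nonneg_left _ (Real.log_natCast_nonneg p)
    exact inv_anti₀ (by positivity) hmono
  calc ∑ p ∈ S.filter (fun p => Nat.log 2 p = k), Real.log p / (p : ℝ) ^ σ
      ≤ ∑ p ∈ S.filter (fun p => Nat.log 2 p = k), Real.log p * (((2 : ℝ) ^ k) ^ σ)⁻¹ :=
        Finset.sum_le_sum hfib
    _ = (∑ p ∈ S.filter (fun p => Nat.log 2 p = k), Real.log p) * (((2 : ℝ) ^ k) ^ σ)⁻¹ := by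
        rw [Finset.sum_mul]
    _ ≤ ((2 ^ (k + 1) : ℕ) * Real.log 4) * (((2 : ℝ) ^ k) ^ σ)⁻¹ := by
        apply mul_le_mul_of_nonneg_right _ (by positivity)
        refine le_trans ?_ (cheb (2 ^ (k + 1)))
        apply Finset.sum_le_sum_of_subset_of_nonneg
        · intro p hp
          obtain ⟨hpS, hpk⟩ := Finset.mem_filter.mp hp
          have hprime := (Finset.mem_filter.mp hpS).2
          have hub : p < 2 ^ (k + 1) := hpk ▸ Nat.lt_pow_succ_log_self (by norm_num) p
          exact Finset.mem_filter.mpr ⟨Finset.mem_range.mpr (by omega), hprime⟩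
        · intro p hp _
          exact Real.log_natCast_nonneg p
    _ = 2 * Real.log 4 * ((2 : ℝ) ^ (1 - σ)) ^ k := by
        push_cast
        rw [← Real.rpow_natCast ((2:ℝ) ^ (1 - σ)) k, ← Real.rpow_natCast (2:ℝ) k,
          ← Real.rpow_mul (by norm_num), ← Real.rpow_natCast (2:ℝ) (k+1),
          ← Real.rpow_mul (by norm_num), ← Real.rpow_neg (by norm_num)]
        push_cast
        rw [show -((k:ℝ) * σ) = ((k:ℝ) + 1) * (-1) + ((1 - σ) * k + 1) by ring] at *
        rw [Real.rpow_add (by norm_num : (0:ℝ) < 2) (((k:ℝ)+1)*(-1)),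
          Real.rpow_add (by norm_num : (0:ℝ) < 2) ((1-σ)*(k:ℝ)), Real.rpow_one]
        rw [show ((k:ℝ)+1)*(-1) = -(((k:ℝ)+1)) by ring, Real.rpow_neg (by norm_num)]
        field_simp


private lemma log4_le : Real.log 4 ≤ 3 := by
  have := Real.log_le_sub_one_of_pos (by norm_num : (0:ℝ) < 4)
  linarith

private lemma half_le_log2 : (1 : ℝ) / 2 ≤ Real.log 2 := by
  have := Real.log_two_gt_d9
  linarith

private lemma one_le_logX {X : ℕ} (hX : 3 ≤ X) : 1 ≤ Real.log X := by
  rw [Real.le_log_iff_exp_le (by positivity)]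
  calc Real.exp 1 ≤ 2.7182818286 := (Real.exp_one_lt_d9).le
    _ ≤ 3 := by norm_num
    _ ≤ (X : ℝ) := by exact_mod_cast hX

private lemma mertens1 {X : ℕ} (hX : 3 ≤ X) :
    ∑ p ∈ (Finset.range (X + 1)).filter Nat.Prime, Real.log p / (p : ℝ) ≤ 18 * Real.log X := by
  have h := dyadic 1 le_rfl X
  simp only [sub_self, Real.rpow_zero, one_pow, Finset.sum_const, Finset.card_range,
    nsmul_eq_mul, mul_one, Real.rpow_one] at h
  refine le_trans h ?_
  have hK : ((Nat.log 2 X : ℝ) + 1) ≤ 3 * Real.log X := by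
    have h2K : ((2:ℕ) ^ (Nat.log 2 X) : ℝ) ≤ (X : ℝ) := by
      exact_mod_cast Nat.pow_log_le_self 2 (by omega : X ≠ 0)
    have := Real.log_le_log (by positivity) h2K
    rw [Real.log_pow] at this
    push_cast at this
    have hlog2 := half_le_log2
    have h1 := one_le_logX hX
    nlinarith [(Nat.cast_nonneg (Nat.log 2 X) : (0:ℝ) ≤ (Nat.log 2 X : ℝ))]
  have hlog4 : (0:ℝ) ≤ Real.log 4 := Real.log_nonneg (by norm_num)
  have h1 := one_le_logX hX
  push_cast
  nlinarith [log4_le]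

private lemma tail_partial {δ : ℝ} (hδ : 0 < δ) (hδ1 : δ ≤ 1) (X : ℕ) :
    ∑ p ∈ (Finset.range (X + 1)).filter Nat.Prime, Real.log p / (p : ℝ) ^ (1 + δ)
      ≤ 24 / δ := by
  have h := dyadic (1 + δ) (by linarith) X
  have hr0 : (0:ℝ) ≤ (2:ℝ) ^ (1 - (1+δ)) := Real.rpow_nonneg (by norm_num) _
  have hr1 : (2:ℝ) ^ (1 - (1+δ)) < 1 := by
    apply Real.rpow_lt_one_of_one_lt_of_neg (by norm_num)
    linarith
  have hgeom := geom_bound hr0 hr1 (Nat.log 2 X + 1)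
  -- 1 - 2^{-δ} ≥ δ/4
  have hkey : δ / 4 ≤ 1 - (2:ℝ) ^ (1 - (1+δ)) := by
    have he : (2:ℝ) ^ (1 - (1+δ)) = Real.exp (-(δ * Real.log 2)) := by
      rw [Real.rpow_def_of_pos (by norm_num)]
      congr 1; ring
    rw [he]
    have hx : δ * Real.log 2 ≤ 1 := by
      have : Real.log 2 ≤ 1 := by
        have := Real.log_le_sub_one_of_pos (by norm_num : (0:ℝ) < 2); linarith
      nlinarith
    have hxpos : 0 < δ * Real.log 2 := by
      have := half_le_log2; nlinarith
    have hexp : Real.exp (-(δ * Real.log 2)) ≤ (1 + δ * Real.log 2)⁻¹ := by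
      rw [Real.exp_neg]
      apply inv_anti₀ (by linarith)
      have := Real.add_one_le_exp (δ * Real.log 2)
      linarith
    have hfrac : (1 + δ * Real.log 2)⁻¹ ≤ 1 - δ * Real.log 2 / 2 := by
      rw [inv_le_iff_one_le_mul₀ (by linarith)]
      nlinarith
    have := half_le_log2
    nlinarith
  have hinv : (1 - (2:ℝ) ^ (1 - (1+δ)))⁻¹ ≤ 4 / δ := by
    rw [inv_le_iff_one_le_mul₀ (by linarith)]
    have : 0 < (4:ℝ)/δ := by positivity
    calc (1:ℝ) = (δ/4) * (4/δ) := by field_simp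
      _ ≤ (1 - (2:ℝ) ^ (1-(1+δ))) * (4/δ) :=
          mul_le_mul_of_nonneg_right hkey this.le
      _ = 4 / δ * (1 - (2:ℝ) ^ (1-(1+δ))) := by ring
  calc ∑ p ∈ (Finset.range (X + 1)).filter Nat.Prime, Real.log p / (p : ℝ) ^ (1 + δ)
      ≤ 2 * Real.log 4 * ∑ k ∈ Finset.range (Nat.log 2 X + 1), ((2 : ℝ) ^ (1 - (1+δ))) ^ k := h
    _ ≤ 2 * Real.log 4 * (4 / δ) := by
        apply mul_le_mul_of_nonneg_left (hgeom.trans hinv)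
        have : (0:ℝ) ≤ Real.log 4 := Real.log_nonneg (by norm_num)
        linarith
    _ ≤ 24 / δ := by
        have h4 := log4_le
        have : (0:ℝ) < 4/δ := by positivity
        have hlog40 : (0:ℝ) ≤ Real.log 4 := Real.log_nonneg (by norm_num)
        rw [show (24:ℝ)/δ = 6 * (4/δ) by ring]
        apply mul_le_mul_of_nonneg_right _ this.le
        linarith


private noncomputable def Hfun (σ : ℝ) (n : ℕ) : ℝ :=
  if n.Prime then Real.log n / (n : ℝ) ^ σ else 0

private noncomputable def Cfun (σ θ : ℝ) (n : ℕ) : ℝ :=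
  if n.Prime then Real.cos (θ * Real.log n) / (n : ℝ) ^ σ else 0

private lemma Hfun_nonneg (σ : ℝ) (n : ℕ) : 0 ≤ Hfun σ n := by
  unfold Hfun
  split
  · apply div_nonneg (Real.log_natCast_nonneg n) (Real.rpow_nonneg (Nat.cast_nonneg n) σ)
  · exact le_refl 0

private lemma Hfun_partial {δ : ℝ} (hδ : 0 < δ) (hδ1 : δ ≤ 1) (N : ℕ) :
    ∑ i ∈ Finset.range N, Hfun (1 + δ) i ≤ 24 / δ := by
  have h1 : ∑ i ∈ Finset.range N, Hfun (1 + δ) i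
      = ∑ p ∈ (Finset.range N).filter Nat.Prime, Real.log p / (p : ℝ) ^ (1 + δ) := by
    rw [Finset.sum_filter]; rfl
  rw [h1]
  refine le_trans (Finset.sum_le_sum_of_subset_of_nonneg ?_ ?_) (tail_partial hδ hδ1 N)
  · exact Finset.filter_subset_filter _ (Finset.range_subset_range.mpr (Nat.le_succ N))
  · intro p _ _
    exact div_nonneg (Real.log_natCast_nonneg p) (Real.rpow_nonneg (Nat.cast_nonneg p) _)

private lemma Hfun_summable {δ : ℝ} (hδ : 0 < δ) (hδ1 : δ ≤ 1) :
    Summable (Hfun (1 + δ)) :=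
  summable_of_sum_range_le (Hfun_nonneg _) (Hfun_partial hδ hδ1)

private lemma Hfun_tsum {δ : ℝ} (hδ : 0 < δ) (hδ1 : δ ≤ 1) :
    ∑' n, Hfun (1 + δ) n ≤ 24 / δ :=
  Real.tsum_le_of_sum_range_le (Hfun_nonneg _) (Hfun_partial hδ hδ1)

private lemma Cfun_abs_le {σ θ : ℝ} (hσ : 0 < σ) (n : ℕ) :
    |Cfun σ θ n| ≤ ((n : ℝ) ^ σ)⁻¹ := by
  unfold Cfun
  split
  · rw [abs_div]
    rcases Nat.eq_zero_or_pos n with rfl | hn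
    · simp [Real.zero_rpow hσ.ne']
    · have hpow : (0:ℝ) < (n:ℝ) ^ σ := Real.rpow_pos_of_pos (by exact_mod_cast hn) σ
      rw [abs_of_pos hpow, div_le_iff₀ hpow]
      rw [inv_mul_cancel₀ hpow.ne']
      exact Real.abs_cos_le_one _
  · simp [Real.rpow_nonneg (Nat.cast_nonneg n) σ]

private lemma rpow_inv_summable {σ : ℝ} (hσ : 1 < σ) :
    Summable (fun n : ℕ => ((n : ℝ) ^ σ)⁻¹) := by
  exact_mod_cast Real.summable_nat_rpow_inv.mpr hσ

private lemma Cfun_summable {σ θ : ℝ} (hσ : 1 < σ) : Summable (Cfun σ θ) := by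
  apply Summable.of_norm_bounded (rpow_inv_summable hσ)
  intro n
  exact Cfun_abs_le (by linarith) n




private lemma trunc {X : ℕ} (hX : 3 ≤ X) (θ : ℝ) :
    |∑ p ∈ (Finset.range (X + 1)).filter Nat.Prime, Real.cos (θ * Real.log p) / (p : ℝ)
      - ∑' n, Cfun (1 + (Real.log X)⁻¹) θ n| ≤ 42 := by
  have hlogX : 1 ≤ Real.log X := one_le_logX hX
  set δ := (Real.log X)⁻¹ with hδdef
  have hδ : 0 < δ := by rw [hδdef]; positivity
  have hδ1 : δ ≤ 1 := by rw [hδdef]; exact inv_le_one_of_one_le₀ hlogX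
  have hδlog : δ * Real.log X = 1 := inv_mul_cancel₀ (by linarith)
  set σ := 1 + δ with hσdef
  have hσ : 1 < σ := by rw [hσdef]; linarith
  have hsC : Summable (Cfun σ θ) := Cfun_summable hσ
  have hsplit := Summable.sum_add_tsum_nat_add (X + 1) hsC
  have hhead : ∑ i ∈ Finset.range (X + 1), Cfun σ θ i
      = ∑ p ∈ (Finset.range (X + 1)).filter Nat.Prime,
          Real.cos (θ * Real.log p) / (p : ℝ) ^ σ := by
    rw [Finset.sum_filter]; rfl
  -- head comparison
  have hheadcmp : |∑ p ∈ (Finset.range (X + 1)).filter Nat.Prime,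
        Real.cos (θ * Real.log p) / (p : ℝ)
      - ∑ p ∈ (Finset.range (X + 1)).filter Nat.Prime,
        Real.cos (θ * Real.log p) / (p : ℝ) ^ σ| ≤ 18 := by
    rw [← Finset.sum_sub_distrib]
    refine le_trans (Finset.abs_sum_le_sum_abs _ _) ?_
    have hbound : ∀ p ∈ (Finset.range (X + 1)).filter Nat.Prime,
        |Real.cos (θ * Real.log p) / (p : ℝ) - Real.cos (θ * Real.log p) / (p : ℝ) ^ σ|
          ≤ δ * (Real.log p / (p : ℝ)) := by
      intro p hp
      have hprime := (Finset.mem_filter.mp hp).2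
      have hp0 : (0 : ℝ) < p := by exact_mod_cast hprime.pos
      have hp1 : (1 : ℝ) ≤ p := by exact_mod_cast hprime.one_lt.le
      have hlogp : 0 ≤ Real.log p := Real.log_nonneg hp1
      have hps : (p : ℝ) ^ σ = (p : ℝ) * (p : ℝ) ^ δ := by
        rw [hσdef, Real.rpow_add hp0, Real.rpow_one]
      have hpd1 : (1 : ℝ) ≤ (p : ℝ) ^ δ := Real.one_le_rpow hp1 hδ.le
      have hpd0 : (0 : ℝ) < (p : ℝ) ^ δ := by linarith
      have hdiff : (p : ℝ)⁻¹ - ((p : ℝ) ^ σ)⁻¹ = (p:ℝ)⁻¹ * (1 - ((p:ℝ)^δ)⁻¹) := by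
        rw [hps, mul_inv]; ring
      have hexp : ((p:ℝ)^δ)⁻¹ = Real.exp (-(Real.log p * δ)) := by
        rw [Real.rpow_def_of_pos hp0, Real.exp_neg]
      have hkey : 1 - ((p:ℝ)^δ)⁻¹ ≤ δ * Real.log p := by
        rw [hexp]
        have := Real.add_one_le_exp (-(Real.log p * δ))
        nlinarith [Real.exp_pos (-(Real.log p * δ))]
      have hkey0 : 0 ≤ 1 - ((p:ℝ)^δ)⁻¹ := by
        have : ((p:ℝ)^δ)⁻¹ ≤ 1 := inv_le_one_of_one_le₀ hpd1
        linarith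
      have heq : Real.cos (θ * Real.log p) / (p : ℝ) - Real.cos (θ * Real.log p) / (p : ℝ) ^ σ
          = Real.cos (θ * Real.log p) * ((p : ℝ)⁻¹ - ((p : ℝ) ^ σ)⁻¹) := by
        rw [div_eq_mul_inv, div_eq_mul_inv, ← mul_sub]
      rw [heq, abs_mul]
      have h1 : |((p : ℝ)⁻¹ - ((p : ℝ) ^ σ)⁻¹)| ≤ δ * Real.log p / p := by
        rw [hdiff, abs_mul, abs_of_nonneg (by positivity : (0:ℝ) ≤ (p:ℝ)⁻¹),
          abs_of_nonneg hkey0]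
        rw [div_eq_mul_inv, mul_comm (δ * Real.log p)]
        exact mul_le_mul_of_nonneg_left hkey (by positivity)
      calc |Real.cos (θ * Real.log p)| * |((p : ℝ)⁻¹ - ((p : ℝ) ^ σ)⁻¹)|
          ≤ 1 * (δ * Real.log p / p) :=
            mul_le_mul (Real.abs_cos_le_one _) h1 (abs_nonneg _) zero_le_one
        _ = δ * (Real.log p / p) := by ring
    refine le_trans (Finset.sum_le_sum hbound) ?_
    rw [← Finset.mul_sum]
    calc δ * ∑ p ∈ (Finset.range (X + 1)).filter Nat.Prime, Real.log p / (p : ℝ)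
        ≤ δ * (18 * Real.log X) := mul_le_mul_of_nonneg_left (mertens1 hX) hδ.le
      _ = 18 := by rw [← mul_assoc, mul_comm δ 18, mul_assoc, hδlog, mul_one]
  -- tail bound
  have hsumshiftC : Summable (fun n => Cfun σ θ (n + (X + 1))) :=
    (summable_nat_add_iff (X + 1)).mpr hsC
  have hsumshiftH : Summable (fun n => Hfun σ (n + (X + 1))) :=
    (summable_nat_add_iff (X + 1)).mpr (hσdef ▸ Hfun_summable hδ hδ1)
  have htail : |∑' n, Cfun σ θ (n + (X + 1))| ≤ 24 := by
    have hptwise : ∀ n : ℕ, |Cfun σ θ (n + (X + 1))| ≤ δ * Hfun σ (n + (X + 1)) := by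
      intro n
      set m := n + (X + 1) with hm
      by_cases hmp : m.Prime
      · have hm0 : (0:ℝ) < m := by exact_mod_cast hmp.pos
        have hmX : (X : ℝ) ≤ (m : ℝ) := by exact_mod_cast (by omega : X ≤ m)
        have hlogm : Real.log X ≤ Real.log m := Real.log_le_log (by positivity) hmX
        have h1m : 1 ≤ δ * Real.log m := by
          calc (1:ℝ) = δ * Real.log X := hδlog.symm
            _ ≤ δ * Real.log m := mul_le_mul_of_nonneg_left hlogm hδ.le
        calc |Cfun σ θ m| ≤ ((m : ℝ) ^ σ)⁻¹ := Cfun_abs_le (by linarith) m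
          _ ≤ (δ * Real.log m) * ((m : ℝ) ^ σ)⁻¹ := by
              nlinarith [inv_nonneg.mpr (Real.rpow_nonneg hm0.le σ)]
          _ = δ * Hfun σ m := by
              unfold Hfun; rw [if_pos hmp]; rw [div_eq_mul_inv]; ring
      · unfold Cfun Hfun
        rw [if_neg hmp, if_neg hmp]
        simp
    calc |∑' n, Cfun σ θ (n + (X + 1))| ≤ ∑' n, |Cfun σ θ (n + (X + 1))| := by
          have := norm_tsum_le_tsum_norm (f := fun n => Cfun σ θ (n + (X + 1))) ?_
          · simpa [Real.norm_eq_abs] using this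
          · simpa [Real.norm_eq_abs] using hsumshiftC.abs
      _ ≤ ∑' n, δ * Hfun σ (n + (X + 1)) := by
          apply Summable.tsum_le_tsum hptwise hsumshiftC.abs (hsumshiftH.mul_left δ)
      _ = δ * ∑' n, Hfun σ (n + (X + 1)) := tsum_mul_left
      _ ≤ δ * ∑' n, Hfun σ n := by
          apply mul_le_mul_of_nonneg_left _ hδ.le
          have hsplitH := Summable.sum_add_tsum_nat_add (f := Hfun σ) (X + 1) (hσdef ▸ Hfun_summable hδ hδ1)
          have hheadH : 0 ≤ ∑ i ∈ Finset.range (X + 1), Hfun σ i :=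
            Finset.sum_nonneg fun i _ => Hfun_nonneg σ i
          linarith
      _ ≤ δ * (24 / δ) := mul_le_mul_of_nonneg_left (hσdef ▸ Hfun_tsum hδ hδ1) hδ.le
      _ = 24 := by field_simp
  have : ∑' n, Cfun σ θ n = (∑ p ∈ (Finset.range (X + 1)).filter Nat.Prime,
      Real.cos (θ * Real.log p) / (p : ℝ) ^ σ) + ∑' n, Cfun σ θ (n + (X + 1)) := by
    rw [← hhead, hsplit]
  rw [this]
  set A := ∑ p ∈ (Finset.range (X + 1)).filter Nat.Prime, Real.cos (θ * Real.log p) / (p : ℝ)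
  set B := ∑ p ∈ (Finset.range (X + 1)).filter Nat.Prime, Real.cos (θ * Real.log p) / (p : ℝ) ^ σ
  set T := ∑' n, Cfun σ θ (n + (X + 1))
  calc |A - (B + T)| = |(A - B) + (-T)| := by ring_nf
    _ ≤ |A - B| + |(-T)| := abs_add_le _ _
    _ ≤ 18 + 24 := add_le_add hheadcmp (by rwa [abs_neg])
    _ = 42 := by norm_num



private lemma prime_two_le (p : Nat.Primes) : (2:ℝ) ≤ (p:ℕ) := by exact_mod_cast p.prop.two_le

private lemma sq_inv_primes_summable : Summable (fun p : Nat.Primes => (((p:ℕ):ℝ) ^ (2:ℕ))⁻¹) := by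
  have h := (rpow_inv_summable (by norm_num : (1:ℝ) < 2)).subtype {n : ℕ | n.Prime}
  apply h.congr
  intro p
  simp only [Function.comp_apply]
  exact congrArg (·⁻¹) (Real.rpow_two _)

private lemma sq_inv_primes_tsum : ∑' p : Nat.Primes, (((p:ℕ):ℝ) ^ (2:ℕ))⁻¹ ≤ 3 := by
  have hz : ∑' n : ℕ, ((n:ℝ) ^ (2:ℕ))⁻¹ = Real.pi ^ 2 / 6 := by
    have := hasSum_zeta_two.tsum_eq
    simpa [one_div] using this
  have hle : ∑' p : Nat.Primes, (((p:ℕ):ℝ) ^ (2:ℕ))⁻¹ ≤ ∑' n : ℕ, ((n:ℝ) ^ (2:ℕ))⁻¹ := by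
    have hsub : Summable (fun n : ℕ => ((n:ℝ) ^ (2:ℕ))⁻¹) := by
      have := rpow_inv_summable (by norm_num : (1:ℝ) < 2)
      apply this.congr
      intro n; rw [← Real.rpow_natCast ((n:ℕ):ℝ) 2]; norm_num
    exact Summable.tsum_subtype_le (f := fun n : ℕ => ((n:ℝ) ^ (2:ℕ))⁻¹) _ (fun n => by positivity) hsub
  rw [hz] at hle
  nlinarith [Real.pi_le_four, hle, Real.pi_pos]

private lemma euler {δ θ : ℝ} (hδ : 0 < δ) (hδ1 : δ ≤ 1) :
    |∑' n, Cfun (1 + δ) θ n -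
      Real.log (‖riemannZeta (((1 + δ : ℝ) : ℂ) + (θ : ℝ) * Complex.I)‖)| ≤ 3 := by
  set s : ℂ := ((1 + δ : ℝ) : ℂ) + (θ : ℝ) * Complex.I with hsdef
  have hsre : s.re = 1 + δ := by simp [hsdef]
  have hsim : s.im = θ := by simp [hsdef]
  have hs : 1 < s.re := by rw [hsre]; linarith
  set f : Nat.Primes → ℂ := fun p => ((p:ℕ):ℂ) ^ (-s) with hfdef
  have hnormf : ∀ p : Nat.Primes, ‖f p‖ = ((p:ℕ):ℝ) ^ (-s.re) := by
    intro p
    have hp0 : (0:ℝ) < ((p:ℕ):ℝ) := by have := prime_two_le p; linarith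
    rw [hfdef]
    simp only []
    rw [show ((p:ℕ):ℂ) = (( ((p:ℕ):ℝ) : ℝ) : ℂ) by push_cast; rfl]
    rw [Complex.norm_cpow_eq_rpow_re_of_pos hp0, Complex.neg_re]
  have hnorm_le : ∀ p : Nat.Primes, ‖f p‖ ≤ (((p:ℕ):ℝ))⁻¹ := by
    intro p
    rw [hnormf p]
    have hp1 : (1:ℝ) ≤ ((p:ℕ):ℝ) := by have := prime_two_le p; linarith
    calc ((p:ℕ):ℝ) ^ (-s.re) ≤ ((p:ℕ):ℝ) ^ (-1 : ℝ) := by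
          apply Real.rpow_le_rpow_of_exponent_le hp1
          rw [hsre]; linarith
      _ = (((p:ℕ):ℝ))⁻¹ := by rw [Real.rpow_neg_one]
  have hnorm_half : ∀ p : Nat.Primes, ‖f p‖ ≤ 1/2 := by
    intro p
    refine (hnorm_le p).trans ?_
    rw [show (1:ℝ)/2 = (2:ℝ)⁻¹ by norm_num]
    exact inv_anti₀ (by norm_num) (prime_two_le p)
  have hf_summable : Summable f := by
    apply Summable.of_norm_bounded (g := fun p : Nat.Primes => ((((p:ℕ):ℝ)) ^ ((1:ℝ)+δ))⁻¹)
    · have h := (rpow_inv_summable (show (1:ℝ) < 1+δ by linarith)).subtype {n : ℕ | n.Prime}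
      exact h.congr fun p => rfl
    · intro p
      rw [hnormf p, hsre, Real.rpow_neg (by positivity)]
  have hlog_summable : Summable (fun p : Nat.Primes => -Complex.log (1 - f p)) :=
    hf_summable.clog_one_sub.neg
  have hE := riemannZeta_eulerProduct_exp_log hs
  have habs : Real.log (‖riemannZeta s‖)
      = ∑' p : Nat.Primes, (-Complex.log (1 - f p)).re := by
    rw [← hE, Complex.norm_exp, Real.log_exp, Complex.re_tsum hlog_summable]
  -- identify real part of f p
  have hre_f : ∀ p : Nat.Primes, (f p).re
      = Real.cos (θ * Real.log (p:ℕ)) * ((((p:ℕ):ℝ)) ^ ((1:ℝ)+δ))⁻¹ := by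
    intro p
    have hp0 : ((p:ℕ):ℂ) ≠ 0 := by
      exact_mod_cast p.prop.pos.ne'
    rw [hfdef]
    simp only []
    rw [Complex.cpow_def_of_ne_zero hp0, ← Complex.natCast_log, Complex.exp_re]
    rw [show ((Real.log (p:ℕ) : ℝ) : ℂ) * (-s) = ((Real.log (p:ℕ) : ℝ) : ℂ) * (-s) from rfl]
    have hre : (((Real.log (p:ℕ) : ℝ) : ℂ) * (-s)).re = Real.log (p:ℕ) * (-(1+δ)) := by
      rw [Complex.re_ofReal_mul, Complex.neg_re, hsre]
    have him : (((Real.log (p:ℕ) : ℝ) : ℂ) * (-s)).im = Real.log (p:ℕ) * (-θ) := by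
      rw [Complex.im_ofReal_mul, Complex.neg_im, hsim]
    rw [hre, him]
    have hp0' : (0:ℝ) < ((p:ℕ):ℝ) := by have := prime_two_le p; linarith
    rw [show Real.log (p:ℕ) * (-(1+δ)) = Real.log ((p:ℕ):ℝ) * (-(1+δ)) from rfl,
      ← Real.rpow_def_of_pos hp0', Real.rpow_neg hp0'.le]
    rw [show Real.log ((p:ℕ):ℝ) * (-θ) = -(θ * Real.log ((p:ℕ):ℝ)) by ring, Real.cos_neg]
    ring
  -- termwise comparison
  have hterm : ∀ p : Nat.Primes,
      |(-Complex.log (1 - f p)).re - (f p).re| ≤ ((((p:ℕ):ℝ)) ^ (2:ℕ))⁻¹ := by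
    intro p
    have hz := hnorm_half p
    have hz1 : ‖-(f p)‖ < 1 := by rw [norm_neg]; linarith
    have hlb := Complex.norm_log_one_add_sub_self_le hz1
    rw [norm_neg] at hlb
    have hineq : ‖Complex.log (1 - f p) + f p‖ ≤ ‖f p‖ ^ 2 := by
      have h1 : (1 - ‖f p‖)⁻¹ ≤ 2 := by
        rw [show (2:ℝ) = ((1:ℝ)/2)⁻¹ by norm_num]
        apply inv_anti₀ (by norm_num) (by linarith)
      calc ‖Complex.log (1 - f p) + f p‖ = ‖Complex.log (1 + -(f p)) - (-(f p))‖ := by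
            rw [sub_neg_eq_add, ← sub_eq_add_neg]
        _ ≤ ‖f p‖ ^ 2 * (1 - ‖f p‖)⁻¹ / 2 := hlb
        _ ≤ ‖f p‖ ^ 2 * 2 / 2 := by
            apply div_le_div_of_nonneg_right _ (by norm_num)
            exact mul_le_mul_of_nonneg_left h1 (by positivity)
        _ = ‖f p‖ ^ 2 := by ring
    calc |(-Complex.log (1 - f p)).re - (f p).re|
        = |(-(Complex.log (1 - f p) + f p)).re| := by
          congr 1
          simp [Complex.neg_re, Complex.add_re]
          ring
      _ ≤ ‖-(Complex.log (1 - f p) + f p)‖ := Complex.abs_re_le_norm _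
      _ = ‖Complex.log (1 - f p) + f p‖ := norm_neg _
      _ ≤ ‖f p‖ ^ 2 := hineq
      _ ≤ ((((p:ℕ):ℝ)) ^ (2:ℕ))⁻¹ := by
          have := hnorm_le p
          have hp0 : (0:ℝ) < ((p:ℕ):ℝ) := by have := prime_two_le p; linarith
          rw [show ((((p:ℕ):ℝ)) ^ (2:ℕ))⁻¹ = ((((p:ℕ):ℝ))⁻¹) ^ (2:ℕ) by
            rw [inv_pow]]
          apply pow_le_pow_left₀ (norm_nonneg _) this
  -- summabilities
  have hre_log_summable : Summable (fun p : Nat.Primes => (-Complex.log (1 - f p)).re) :=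
    (Complex.hasSum_re hlog_summable.hasSum).summable
  have hre_f_summable : Summable (fun p : Nat.Primes => (f p).re) :=
    (Complex.hasSum_re hf_summable.hasSum).summable
  -- sum of (f p).re equals tsum of Cfun
  have hCfun : ∑' p : Nat.Primes, (f p).re = ∑' n, Cfun (1 + δ) θ n := by
    rw [show ∑' p : Nat.Primes, (f p).re
        = ∑' p : ↥{n : ℕ | n.Prime}, (fun n : ℕ =>
            Real.cos (θ * Real.log n) * (((n : ℝ)) ^ ((1:ℝ)+δ))⁻¹) ↑p by
      exact tsum_congr fun p => hre_f p]
    rw [tsum_subtype {n : ℕ | n.Prime}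
      (fun n : ℕ => Real.cos (θ * Real.log n) * (((n : ℝ)) ^ ((1:ℝ)+δ))⁻¹)]
    apply tsum_congr
    intro n
    simp only [Set.indicator_apply, Set.mem_setOf_eq]
    unfold Cfun
    by_cases hn : n.Prime
    · simp [hn, div_eq_mul_inv]
    · simp [hn]
  -- conclude
  have hdiff : |∑' p : Nat.Primes, (-Complex.log (1 - f p)).re - ∑' p : Nat.Primes, (f p).re|
      ≤ 3 := by
    rw [← Summable.tsum_sub hre_log_summable hre_f_summable]
    calc |∑' p : Nat.Primes, ((-Complex.log (1 - f p)).re - (f p).re)|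
        ≤ ∑' p : Nat.Primes, |(-Complex.log (1 - f p)).re - (f p).re| := by
          have hsd := hre_log_summable.sub hre_f_summable
          have := norm_tsum_le_tsum_norm (f := fun p : Nat.Primes =>
            (-Complex.log (1 - f p)).re - (f p).re) (by simpa [Real.norm_eq_abs] using hsd.abs)
          simpa [Real.norm_eq_abs] using this
      _ ≤ ∑' p : Nat.Primes, ((((p:ℕ):ℝ)) ^ (2:ℕ))⁻¹ := by
          apply Summable.tsum_le_tsum hterm ((hre_log_summable.sub hre_f_summable).abs)
            sq_inv_primes_summable
      _ ≤ 3 := sq_inv_primes_tsum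
  rw [habs, ← hCfun]
  rw [abs_sub_comm]
  exact hdiff


private lemma zeta_bound : ∃ Cz : ℝ, 0 < Cz ∧ ∀ δ θ : ℝ, 0 < δ → δ ≤ 1 → 0 ≤ θ → θ ≤ 1 →
    |Real.log (‖riemannZeta (((1 + δ : ℝ) : ℂ) + (θ : ℝ) * Complex.I)‖)
      + Real.log (max δ θ)| ≤ Cz := by
  classical
  set g : ℂ → ℂ := Function.update (fun s : ℂ => (s - 1) * riemannZeta s) 1 1 with hgdef
  set K : Set ℂ := (fun q : ℝ × ℝ => (q.1 : ℂ) + (q.2 : ℂ) * Complex.I) ''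
    (Set.Icc 1 2 ×ˢ Set.Icc 0 1) with hKdef
  have hcont_param : Continuous (fun q : ℝ × ℝ => (q.1 : ℂ) + (q.2 : ℂ) * Complex.I) :=
    ((Complex.continuous_ofReal.comp continuous_fst).add
      ((Complex.continuous_ofReal.comp continuous_snd).mul continuous_const))
  have hKc : IsCompact K := (isCompact_Icc.prod isCompact_Icc).image hcont_param
  have hKre : ∀ z ∈ K, 1 ≤ z.re ∧ z.re ≤ 2 ∧ 0 ≤ z.im ∧ z.im ≤ 1 := by
    rintro z ⟨⟨x, y⟩, ⟨⟨hx1, hx2⟩, ⟨hy1, hy2⟩⟩, rfl⟩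
    have hre : ((x : ℂ) + (y : ℂ) * Complex.I).re = x := by simp
    have him : ((x : ℂ) + (y : ℂ) * Complex.I).im = y := by simp
    rw [hre, him]
    exact ⟨hx1, hx2, hy1, hy2⟩
  have hg_one : g 1 = 1 := Function.update_self 1 1 _
  have hg_ne_one : ∀ z : ℂ, z ≠ 1 → g z = (z - 1) * riemannZeta z := fun z hz =>
    Function.update_of_ne hz 1 _
  have hg_cont : ∀ z ∈ K, ContinuousAt g z := by
    intro z hz
    by_cases h1 : z = 1
    · subst h1
      have h1' : Filter.Tendsto g (nhdsWithin 1 {1}ᶜ) (nhds 1) := by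
        apply riemannZeta_residue_one.congr'
        filter_upwards [eventually_mem_nhdsWithin] with w hw
        exact (hg_ne_one w hw).symm
      have h2' : Filter.Tendsto g (pure 1) (nhds 1) := by
        have := tendsto_pure_nhds g (1 : ℂ)
        rwa [hg_one] at this
      have hsup : Filter.Tendsto g (nhdsWithin 1 {1}ᶜ ⊔ pure 1) (nhds 1) :=
        Filter.tendsto_sup.mpr ⟨h1', h2'⟩
      rw [nhdsNE_sup_pure] at hsup
      rw [ContinuousAt, hg_one]
      exact hsup
    · have hbase : ContinuousAt (fun s : ℂ => (s - 1) * riemannZeta s) z :=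
        ((continuousAt_id.sub continuousAt_const).mul
          (differentiableAt_riemannZeta h1).continuousAt)
      apply hbase.congr
      filter_upwards [isOpen_compl_singleton.eventually_mem
        (show z ∈ ({1} : Set ℂ)ᶜ from h1)] with w hw
      exact (hg_ne_one w hw).symm
  have hg_ne : ∀ z ∈ K, g z ≠ 0 := by
    intro z hz
    by_cases h1 : z = 1
    · rw [h1, hg_one]; exact one_ne_zero
    · rw [hg_ne_one z h1]
      exact mul_ne_zero (sub_ne_zero.mpr h1) (riemannZeta_ne_zero_of_one_le_re (hKre z hz).1)
  have hKne : K.Nonempty := ⟨(1 : ℂ), ⟨(1, 0), by norm_num, by simp⟩⟩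
  have hcontOn : ContinuousOn (fun z => ‖g z‖) K := fun z hz =>
    ((hg_cont z hz).continuousWithinAt).norm
  obtain ⟨zm, hzmK, hzm⟩ := hKc.exists_isMinOn hKne hcontOn
  obtain ⟨zM, hzMK, hzM⟩ := hKc.exists_isMaxOn hKne hcontOn
  set m := ‖g zm‖ with hmdef
  set M := ‖g zM‖ with hMdef
  have hm0 : 0 < m := by
    rw [hmdef]
    exact (norm_pos_iff.mpr (hg_ne zm hzmK))
  refine ⟨|Real.log (m / 2)| + |Real.log M| + 1, by positivity, ?_⟩
  intro δ θ hδ hδ1 hθ0 hθ1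
  set z : ℂ := ((1 + δ : ℝ) : ℂ) + (θ : ℝ) * Complex.I with hzdef
  have hzK : z ∈ K := ⟨(1 + δ, θ),
    Set.mk_mem_prod (Set.mem_Icc.mpr ⟨by linarith, by linarith⟩)
      (Set.mem_Icc.mpr ⟨hθ0, hθ1⟩), rfl⟩
  have hzre : z.re = 1 + δ := by simp [hzdef]
  have hz1 : z ≠ 1 := by
    intro h
    rw [h] at hzre
    simp at hzre
    linarith
  have hsub : z - 1 = ((δ : ℝ) : ℂ) + (θ : ℝ) * Complex.I := by
    rw [hzdef]; push_cast; ring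
  have hsubre : (z - 1).re = δ := by rw [hsub]; simp
  have hsubim : (z - 1).im = θ := by rw [hsub]; simp
  set r := ‖z - 1‖ with hrdef
  have hmx : 0 < max δ θ := lt_max_of_lt_left hδ
  have hr_ge : max δ θ ≤ r := by
    apply max_le
    · calc δ = (z - 1).re := hsubre.symm
        _ ≤ |(z - 1).re| := le_abs_self _
        _ ≤ r := Complex.abs_re_le_norm _
    · calc θ = (z - 1).im := hsubim.symm
        _ ≤ |(z - 1).im| := le_abs_self _
        _ ≤ r := Complex.abs_im_le_norm _
  have hr_le : r ≤ 2 * max δ θ := by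
    calc r ≤ |(z - 1).re| + |(z - 1).im| := Complex.norm_le_abs_re_add_abs_im _
      _ = δ + θ := by rw [hsubre, hsubim, abs_of_pos hδ, abs_of_nonneg hθ0]
      _ ≤ 2 * max δ θ := by
          have := le_max_left δ θ; have := le_max_right δ θ; linarith
  set A := ‖riemannZeta z‖ with hAdef
  have hA0 : 0 < A := norm_pos_iff.mpr (riemannZeta_ne_zero_of_one_le_re (by rw [hzre]; linarith))
  have habsgz : ‖g z‖ = r * A := by
    rw [hg_ne_one z hz1, norm_mul]
  have hmle : m ≤ r * A := by rw [← habsgz]; exact isMinOn_iff.mp hzm z hzK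
  have hMge : r * A ≤ M := by rw [← habsgz]; exact isMaxOn_iff.mp hzM z hzK
  have hupper : A * max δ θ ≤ M := by
    calc A * max δ θ ≤ A * r := mul_le_mul_of_nonneg_left hr_ge hA0.le
      _ = r * A := mul_comm _ _
      _ ≤ M := hMge
  have hlower : m / 2 ≤ A * max δ θ := by
    have : r * A ≤ (2 * max δ θ) * A := mul_le_mul_of_nonneg_right hr_le hA0.le
    nlinarith
  have hlog_eq : Real.log (‖riemannZeta z‖) + Real.log (max δ θ)
      = Real.log (A * max δ θ) := by
    rw [← hAdef, Real.log_mul hA0.ne' hmx.ne']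
  rw [hlog_eq]
  rw [abs_le]
  constructor
  · have h1 : Real.log (m / 2) ≤ Real.log (A * max δ θ) :=
      Real.log_le_log (by positivity) hlower
    have h2 : -|Real.log (m / 2)| ≤ Real.log (m / 2) := neg_abs_le _
    have h3 := abs_nonneg (Real.log M)
    linarith
  · have h1 : Real.log (A * max δ θ) ≤ Real.log M :=
      Real.log_le_log (by positivity) hupper
    have h2 : Real.log M ≤ |Real.log M| := le_abs_self _
    have h3 := abs_nonneg (Real.log (m / 2))
    linarith

private lemma master : ∃ C : ℝ, 0 < C ∧ ∀ θ : ℝ, 0 ≤ θ → θ ≤ 1 → ∀ X : ℕ, 3 ≤ X →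
    |∑ p ∈ (Finset.range (X + 1)).filter Nat.Prime, Real.cos (θ * Real.log p) / (p : ℝ)
      + Real.log (max (Real.log X)⁻¹ θ)| ≤ C := by
  obtain ⟨Cz, hCz0, hCz⟩ := zeta_bound
  refine ⟨45 + Cz, by linarith, ?_⟩
  intro θ hθ0 hθ1 X hX
  have hlogX : 1 ≤ Real.log X := one_le_logX hX
  set δ := (Real.log X)⁻¹ with hδdef
  have hδ : 0 < δ := by rw [hδdef]; positivity
  have hδ1 : δ ≤ 1 := by rw [hδdef]; exact inv_le_one_of_one_le₀ hlogX
  have h1 := trunc hX θ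
  have h2 := euler (θ := θ) hδ hδ1
  have h3 := hCz δ θ hδ hδ1 hθ0 hθ1
  rw [← hδdef] at h1
  have hmc : max δ θ = max (Real.log X)⁻¹ θ := by rw [hδdef]
  rw [hmc] at h3
  set S := ∑ p ∈ (Finset.range (X + 1)).filter Nat.Prime,
    Real.cos (θ * Real.log p) / (p : ℝ)
  set T := ∑' n, Cfun (1 + δ) θ n
  set L := Real.log (‖riemannZeta (((1 + δ : ℝ) : ℂ) + (θ : ℝ) * Complex.I)‖)
  have : S + Real.log (max (Real.log X)⁻¹ θ) = (S - T) + (T - L) + (L + Real.log (max (Real.log X)⁻¹ θ)) := by ring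
  rw [this]
  calc |(S - T) + (T - L) + (L + Real.log (max (Real.log X)⁻¹ θ))|
      ≤ |(S - T) + (T - L)| + |L + Real.log (max (Real.log X)⁻¹ θ)| := abs_add_le _ _
    _ ≤ (|S - T| + |T - L|) + |L + Real.log (max (Real.log X)⁻¹ θ)| := by
        have := abs_add_le (S - T) (T - L); linarith
    _ ≤ (42 + 3) + Cz := by
        have := add_le_add (add_le_add h1 h2) h3; linarith
    _ = 45 + Cz := by norm_num

/-- For `θ ∈ (0,1]`, `f_θ(p) := 1 + cos(θ log p)` and `β := min{1/θ, log X}`: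
`Σ_{p ≤ X} f_θ(p)/p = log(β·log X) + O(1)` with an absolute implied constant. -/
theorem stmt_10 :
    ∃ K : ℝ, 0 < K ∧ ∀ θ : ℝ, 0 < θ → θ ≤ 1 → ∀ X : ℕ, 3 ≤ X →
      |∑ p ∈ (Finset.range (X + 1)).filter Nat.Prime,
          (1 + Real.cos (θ * Real.log p)) / (p : ℝ) -
        Real.log (min (1 / θ) (Real.log X) * Real.log X)| ≤ K := by
  obtain ⟨C, hC0, hC⟩ := master
  refine ⟨2 * C, by linarith, ?_⟩
  intro θ hθ0 hθ1 X hX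
  have hlogX : 1 ≤ Real.log X := one_le_logX hX
  set δ := (Real.log X)⁻¹ with hδdef
  have hδ : 0 < δ := by rw [hδdef]; positivity
  have h0 := hC 0 le_rfl zero_le_one X hX
  have hθ := hC θ hθ0.le hθ1 X hX
  rw [← hδdef] at h0 hθ
  have hcos0 : ∑ p ∈ (Finset.range (X + 1)).filter Nat.Prime,
      Real.cos (0 * Real.log p) / (p : ℝ)
      = ∑ p ∈ (Finset.range (X + 1)).filter Nat.Prime, 1 / (p : ℝ) := by
    apply Finset.sum_congr rfl
    intro p _
    rw [zero_mul, Real.cos_zero]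
  rw [hcos0, max_eq_left hδ.le] at h0
  have hsplit : ∑ p ∈ (Finset.range (X + 1)).filter Nat.Prime,
      (1 + Real.cos (θ * Real.log p)) / (p : ℝ)
      = (∑ p ∈ (Finset.range (X + 1)).filter Nat.Prime, 1 / (p : ℝ))
        + ∑ p ∈ (Finset.range (X + 1)).filter Nat.Prime,
            Real.cos (θ * Real.log p) / (p : ℝ) := by
    rw [← Finset.sum_add_distrib]
    apply Finset.sum_congr rfl
    intro p _
    rw [add_div]
  have hmin : min (1 / θ) (Real.log X) = (max θ δ)⁻¹ := by
    rw [one_div, show Real.log (X : ℕ) = δ⁻¹ by rw [hδdef, inv_inv]]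
    rcases le_total θ δ with h | h
    · rw [max_eq_right h, min_eq_right (inv_anti₀ hθ0 h)]
    · rw [max_eq_left h, min_eq_left (inv_anti₀ hδ h)]
  have hmin0 : 0 < min (1 / θ) (Real.log X) := lt_min (by positivity) (by linarith)
  have hlogmul : Real.log (min (1 / θ) (Real.log X) * Real.log X)
      = Real.log (min (1 / θ) (Real.log X)) + Real.log (Real.log X) :=
    Real.log_mul hmin0.ne' (by linarith)
  have hlogmin : Real.log (min (1 / θ) (Real.log X)) = -Real.log (max θ δ) := by
    rw [hmin, Real.log_inv]
  rw [hsplit, hlogmul, hlogmin]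
  set S1 := ∑ p ∈ (Finset.range (X + 1)).filter Nat.Prime, 1 / (p : ℝ)
  set S2 := ∑ p ∈ (Finset.range (X + 1)).filter Nat.Prime,
    Real.cos (θ * Real.log p) / (p : ℝ)
  have hld : Real.log δ = -Real.log (Real.log X) := by rw [hδdef, Real.log_inv]
  have hkey : S1 + S2 - (-Real.log (max θ δ) + Real.log (Real.log X))
      = (S1 + Real.log δ) + (S2 + Real.log (max δ θ)) := by
    rw [hld, max_comm δ θ]; ring
  rw [hkey]
  calc |(S1 + Real.log δ) + (S2 + Real.log (max δ θ))|
      ≤ |S1 + Real.log δ| + |S2 + Real.log (max δ θ)| := abs_add_le _ _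
    _ ≤ C + C := add_le_add h0 hθ
    _ = 2 * C := by ring
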